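/- (Some AIXIs are stupid, core construction.) Assume Γ_1 > 0 and e⁰ ∈ E with r(e⁰) = 0. Let ξ be a CCS with full support such that V^π_ξ(h) > 0 for every policy π and every history h. Then for every ε > 0 there exist a policy π₀, ε' ∈ (0,1], and ξ' := (1/2)·ν + (ε'/2)·ξ with ν the π₀-dogmatic environment for ξ, such that every ξ'-optimal policy π* satisfies Υ_ξ(π*) < (inf over all policies π of Υ_ξ(π)) + ε. -/

import Mathlib

open scoped Classical

/-- A history: a finite alternating sequence of action–percept pairs. -/
abbrev Hist (A E : Type*) := List (A × E)

/-- A policy maps histories to actions. -/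
abbrev Policy (A E : Type*) := Hist A E → A

/-- A chronological conditional semimeasure (CCS, environment):
values in `[0,1]`, and the chronological semimeasure condition. -/
structure CCS (A E : Type*) [Fintype E] where
  val : Hist A E → ℝ
  nonneg : ∀ h, 0 ≤ val h
  le_one : ∀ h, val h ≤ 1
  chrono : ∀ (h : Hist A E) (a : A), (∑ e : E, val (h ++ [(a, e)])) ≤ val h

/-- `Gam γ t = Γ_t = ∑_{i ≥ t} γ_i`, the discount normalization factor. -/
noncomputable def Gam (γ : ℕ → ℝ) (t : ℕ) : ℝ := ∑' i : ℕ, γ (t + i)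

/-- Extend a history by a list of percepts, with actions chosen by the policy `π`. -/
def extendH {A E : Type*} (π : Policy A E) : Hist A E → List E → Hist A E
  | h, [] => h
  | h, e :: es => extendH π (h ++ [(π h, e)]) es

/-- The value `V^π_ν(ae_{<t})` of policy `π` in environment `ν` given history `h = ae_{<t}`
(with `t = h.length + 1`); `0` whenever `Γ_t ≤ 0` or `ν(e_{<t} ∣ a_{<t}) ≤ 0`. -/
noncomputable def V {A E : Type*} [Fintype E] (γ : ℕ → ℝ) (r : E → ℝ)
    (π : Policy A E) (ν : CCS A E) (h : Hist A E) : ℝ :=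
  if 0 < Gam γ (h.length + 1) ∧ 0 < ν.val h then
    (1 / (Gam γ (h.length + 1) * ν.val h)) *
      ∑' n : ℕ, γ (h.length + 1 + n) *
        ∑ es : Fin (n + 1) → E,
          r (es (Fin.last n)) * ν.val (extendH π h (List.ofFn es))
  else 0

/-- The value `V^π_ν(h a)` of a history ending in the action `a`:
the action at time `t` is `a`, and `π` is followed from time `t+1` on. -/
noncomputable def Vact {A E : Type*} [Fintype E] (γ : ℕ → ℝ) (r : E → ℝ)
    (π : Policy A E) (ν : CCS A E) (h : Hist A E) (a : A) : ℝ :=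
  V γ r (fun h' => if h' = h then a else π h') ν h

/-- The optimal value `V^*_ν(h) = sup_π V^π_ν(h)`. -/
noncomputable def VOpt {A E : Type*} [Fintype E] (γ : ℕ → ℝ) (r : E → ℝ)
    (ν : CCS A E) (h : Hist A E) : ℝ :=
  ⨆ π : Policy A E, V γ r π ν h

/-- The optimal value `V^*_ν(h a)` of a history ending in an action. -/
noncomputable def VOptAct {A E : Type*} [Fintype E] (γ : ℕ → ℝ) (r : E → ℝ)
    (ν : CCS A E) (h : Hist A E) (a : A) : ℝ :=
  ⨆ π : Policy A E, Vact γ r π ν h a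

/-- A history is consistent with `π` iff each of its actions is the one chosen by `π`. -/
def Consistent {A E : Type*} (π : Policy A E) (h : Hist A E) : Prop :=
  ∀ (k : ℕ) (hk : k < h.length), (h.get ⟨k, hk⟩).1 = π (h.take k)

/-- Auxiliary function for the dogmatic environment: `pre` is the consistent
prefix processed so far, the second argument is the rest of the history. -/
noncomputable def dogmaAux {A E : Type*} [Fintype E] (ξ : CCS A E) (π : Policy A E)
    (e0 : E) : Hist A E → Hist A E → ℝ
  | pre, [] => ξ.val pre
  | pre, (a, e) :: rest =>
    if a = π pre then dogmaAux ξ π e0 (pre ++ [(a, e)]) rest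
    else if e = e0 ∧ ∀ p ∈ rest, p.2 = e0 then ξ.val pre else 0

/-- The `π`-dogmatic environment for `ξ`: mimics `ξ` while the actions follow `π`;
from the first deviation on it deterministically emits `e0` and freezes the mass. -/
noncomputable def dogma {A E : Type*} [Fintype E] (ξ : CCS A E) (π : Policy A E)
    (e0 : E) (h : Hist A E) : ℝ :=
  dogmaAux ξ π e0 [] h

/-- A CCS has full support iff it is positive on every history. -/
def FullSupport {A E : Type*} [Fintype E] (ξ : CCS A E) : Prop :=
  ∀ h : Hist A E, 0 < ξ.val h

section Aux

variable {A E : Type*} [Fintype E]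

/-- `FollowsFrom π pre rest`: every action in `rest` is the one `π` chooses,
given that `pre` is the history so far. -/
def FollowsFrom (π : Policy A E) : Hist A E → Hist A E → Prop
  | _, [] => True
  | pre, (a, e) :: rest => a = π pre ∧ FollowsFrom π (pre ++ [(a, e)]) rest

lemma dogmaAux_followsFrom (ξ : CCS A E) (π : Policy A E) (e0 : E) :
    ∀ (rest pre : Hist A E), FollowsFrom π pre rest →
      ∀ tail, dogmaAux ξ π e0 pre (rest ++ tail) = dogmaAux ξ π e0 (pre ++ rest) tail
  | [], pre, _, tail => by simp
  | (a, e) :: rest, pre, hf, tail => by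
    obtain ⟨ha, hf'⟩ := hf
    rw [List.cons_append, dogmaAux, if_pos ha,
      dogmaAux_followsFrom ξ π e0 rest (pre ++ [(a, e)]) hf' tail, List.append_assoc]
    rfl

/-- The trajectory of action–percept pairs appended by `extendH`. -/
def traj (π : Policy A E) : Hist A E → List E → Hist A E
  | _, [] => []
  | pre, e :: es => (π pre, e) :: traj π (pre ++ [(π pre, e)]) es

lemma extendH_eq_traj (π : Policy A E) :
    ∀ (l : List E) (h : Hist A E), extendH π h l = h ++ traj π h l
  | [], h => by simp [extendH, traj]
  | e :: es, h => by
    rw [extendH, traj, extendH_eq_traj π es (h ++ [(π h, e)]), List.append_assoc]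
    rfl

lemma traj_followsFrom (π : Policy A E) :
    ∀ (l : List E) (h : Hist A E), FollowsFrom π h (traj π h l)
  | [], h => trivial
  | e :: es, h => ⟨rfl, traj_followsFrom π es (h ++ [(π h, e)])⟩

lemma traj_snd (π : Policy A E) :
    ∀ (l : List E) (h : Hist A E), (traj π h l).map Prod.snd = l
  | [], h => rfl
  | e :: es, h => by rw [traj, List.map_cons, traj_snd π es (h ++ [(π h, e)])]

lemma followsFrom_snoc (π : Policy A E) (e : E) :
    ∀ (rest pre : Hist A E), FollowsFrom π pre rest →
      FollowsFrom π pre (rest ++ [(π (pre ++ rest), e)])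
  | [], pre, _ => by simpa [FollowsFrom] using ⟨rfl, trivial⟩
  | (a, e') :: rest, pre, hf => by
    obtain ⟨ha, hf'⟩ := hf
    refine ⟨ha, ?_⟩
    have := followsFrom_snoc π e rest (pre ++ [(a, e')]) hf'
    simpa [List.append_assoc] using this

end Aux
section Aux2
set_option linter.unusedSectionVars false

variable {A E : Type*} [Fintype E]

/-- On a consistent history extended consistently, the dogmatic environment equals `ξ`. -/
lemma dogma_extend_consistent (ξ : CCS A E) (π : Policy A E) (e0 : E)
    (h : Hist A E) (hf : FollowsFrom π [] h) (l : List E) :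
    dogma ξ π e0 (extendH π h l) = ξ.val (extendH π h l) := by
  rw [extendH_eq_traj, dogma]
  have h1 : dogmaAux ξ π e0 [] (h ++ traj π h l) = dogmaAux ξ π e0 h (traj π h l) := by
    simpa using dogmaAux_followsFrom ξ π e0 h [] hf (traj π h l)
  have h2 : dogmaAux ξ π e0 h (traj π h l ++ []) =
      dogmaAux ξ π e0 (h ++ traj π h l) [] :=
    dogmaAux_followsFrom ξ π e0 (traj π h l) h (traj_followsFrom π l h) []
  simpa [dogmaAux] using h1.trans (by simpa [dogmaAux] using h2)

lemma dogma_consistent (ξ : CCS A E) (π : Policy A E) (e0 : E)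
    (h : Hist A E) (hf : FollowsFrom π [] h) : dogma ξ π e0 h = ξ.val h := by
  simpa [extendH] using dogma_extend_consistent ξ π e0 h hf []

/-- Deviation kills the reward: if the first action after a consistent history `h`
deviates from `π₀`, then every dogma-weighted reward term vanishes. -/
lemma dogma_deviate (ξ : CCS A E) (π₀ : Policy A E) (e0 : E) (r : E → ℝ) (hr0 : r e0 = 0)
    (h : Hist A E) (hf : FollowsFrom π₀ [] h) (π : Policy A E) (hdev : π h ≠ π₀ h)
    (n : ℕ) (es : Fin (n + 1) → E) :
    r (es (Fin.last n)) * dogma ξ π₀ e0 (extendH π h (List.ofFn es)) = 0 := by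
  rw [extendH_eq_traj, dogma]
  have h1 : dogmaAux ξ π₀ e0 [] (h ++ traj π h (List.ofFn es)) =
      dogmaAux ξ π₀ e0 h (traj π h (List.ofFn es)) := by
    simpa using dogmaAux_followsFrom ξ π₀ e0 h [] hf (traj π h (List.ofFn es))
  rw [h1]
  rw [List.ofFn_succ, traj, dogmaAux, if_neg hdev]
  split
  · rename_i hcond
    -- all percepts in the trajectory are e0, so the last percept is e0
    have hlast : es (Fin.last n) = e0 := by
      have hmem : es (Fin.last n) ∈ List.ofFn es := by
        rw [List.mem_ofFn]; exact ⟨Fin.last n, rfl⟩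
      have hsnd : (traj π h (List.ofFn es)).map Prod.snd = List.ofFn es :=
        traj_snd π (List.ofFn es) h
      rw [List.ofFn_succ, traj, List.map_cons] at hsnd
      rw [List.ofFn_succ, ← hsnd] at hmem
      rcases List.mem_cons.1 hmem with h' | h'
      · exact h'.trans hcond.1
      · obtain ⟨p, hp, hpe⟩ := List.mem_map.1 h'
        exact hpe ▸ hcond.2 p hp
    rw [hlast, hr0, zero_mul]
  · rw [mul_zero]

end Aux2
section Aux3
set_option linter.unusedSectionVars false

variable {A E : Type*} [Fintype E]

lemma sum_extendH_le (μ : CCS A E) (π : Policy A E) :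
    ∀ (n : ℕ) (h : Hist A E),
      (∑ es : Fin n → E, μ.val (extendH π h (List.ofFn es))) ≤ μ.val h
  | 0, h => by
    simp [extendH, List.ofFn_zero]
  | n + 1, h => by
    rw [← (Fin.consEquiv (fun _ : Fin (n + 1) => E)).sum_comp, Fintype.sum_prod_type]
    have step : ∀ e : E,
        (∑ g : Fin n → E,
          μ.val (extendH π h (List.ofFn ((Fin.consEquiv fun _ : Fin (n+1) => E) (e, g))))) ≤
          μ.val (h ++ [(π h, e)]) := by
      intro e
      have : ∀ g : Fin n → E,
          extendH π h (List.ofFn ((Fin.consEquiv fun _ : Fin (n+1) => E) (e, g))) =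
          extendH π (h ++ [(π h, e)]) (List.ofFn g) := by
        intro g
        have : List.ofFn ((Fin.consEquiv fun _ : Fin (n+1) => E) (e, g)) = e :: List.ofFn g := by
          simp [Fin.consEquiv, List.ofFn_succ]
        rw [this, extendH]
      rw [Finset.sum_congr rfl fun g _ => by rw [this g]]
      exact sum_extendH_le μ π n (h ++ [(π h, e)])
    calc (∑ e : E, ∑ g : Fin n → E,
            μ.val (extendH π h (List.ofFn ((Fin.consEquiv fun _ : Fin (n+1) => E) (e, g)))))
        ≤ ∑ e : E, μ.val (h ++ [(π h, e)]) := Finset.sum_le_sum fun e _ => step e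
      _ ≤ μ.val h := μ.chrono h (π h)

/-- The `n`-th term of the value series. -/
noncomputable def Sterm (γ : ℕ → ℝ) (r : E → ℝ) (π : Policy A E) (μ : CCS A E)
    (h : Hist A E) (n : ℕ) : ℝ :=
  γ (h.length + 1 + n) *
    ∑ es : Fin (n + 1) → E, r (es (Fin.last n)) * μ.val (extendH π h (List.ofFn es))

lemma Sterm_nonneg (γ : ℕ → ℝ) (hγ0 : ∀ t, 0 ≤ γ t) (r : E → ℝ) (hr : ∀ e, 0 ≤ r e ∧ r e ≤ 1)
    (π : Policy A E) (μ : CCS A E) (h : Hist A E) (n : ℕ) : 0 ≤ Sterm γ r π μ h n :=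
  mul_nonneg (hγ0 _) (Finset.sum_nonneg fun es _ => mul_nonneg (hr _).1 (μ.nonneg _))

lemma Sterm_le (γ : ℕ → ℝ) (hγ0 : ∀ t, 0 ≤ γ t) (r : E → ℝ) (hr : ∀ e, 0 ≤ r e ∧ r e ≤ 1)
    (π : Policy A E) (μ : CCS A E) (h : Hist A E) (n : ℕ) :
    Sterm γ r π μ h n ≤ γ (h.length + 1 + n) * μ.val h := by
  refine mul_le_mul_of_nonneg_left ?_ (hγ0 _)
  calc (∑ es : Fin (n+1) → E, r (es (Fin.last n)) * μ.val (extendH π h (List.ofFn es)))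
      ≤ ∑ es : Fin (n+1) → E, μ.val (extendH π h (List.ofFn es)) :=
        Finset.sum_le_sum fun es _ => by
          have := μ.nonneg (extendH π h (List.ofFn es))
          nlinarith [(hr (es (Fin.last n))).1, (hr (es (Fin.last n))).2]
    _ ≤ μ.val h := sum_extendH_le μ π (n+1) h

lemma summable_shift (γ : ℕ → ℝ) (hγs : Summable γ) (t : ℕ) :
    Summable (fun n => γ (t + n)) := by
  simpa [add_comm] using (summable_nat_add_iff t).2 hγs

lemma Sterm_summable (γ : ℕ → ℝ) (hγ0 : ∀ t, 0 ≤ γ t) (hγs : Summable γ)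
    (r : E → ℝ) (hr : ∀ e, 0 ≤ r e ∧ r e ≤ 1)
    (π : Policy A E) (μ : CCS A E) (h : Hist A E) : Summable (Sterm γ r π μ h) := by
  refine Summable.of_nonneg_of_le (Sterm_nonneg γ hγ0 r hr π μ h)
    (fun n => Sterm_le γ hγ0 r hr π μ h n) ?_
  exact ((summable_shift γ hγs (h.length + 1)).mul_right (μ.val h))

lemma Sterm_tsum_le (γ : ℕ → ℝ) (hγ0 : ∀ t, 0 ≤ γ t) (hγs : Summable γ)
    (r : E → ℝ) (hr : ∀ e, 0 ≤ r e ∧ r e ≤ 1)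
    (π : Policy A E) (μ : CCS A E) (h : Hist A E) :
    (∑' n, Sterm γ r π μ h n) ≤ Gam γ (h.length + 1) * μ.val h := by
  have := Summable.tsum_le_tsum (Sterm_le γ hγ0 r hr π μ h)
    (Sterm_summable γ hγ0 hγs r hr π μ h)
    ((summable_shift γ hγs (h.length + 1)).mul_right (μ.val h))
  rwa [tsum_mul_right] at this

lemma V_eq_of_pos (γ : ℕ → ℝ) (r : E → ℝ) (π : Policy A E) (μ : CCS A E) (h : Hist A E)
    (hG : 0 < Gam γ (h.length + 1)) (hμ : 0 < μ.val h) :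
    V γ r π μ h = (1 / (Gam γ (h.length + 1) * μ.val h)) * ∑' n, Sterm γ r π μ h n := by
  rw [V, if_pos ⟨hG, hμ⟩]; rfl

lemma V_nonneg (γ : ℕ → ℝ) (hγ0 : ∀ t, 0 ≤ γ t) (r : E → ℝ) (hr : ∀ e, 0 ≤ r e ∧ r e ≤ 1)
    (π : Policy A E) (μ : CCS A E) (h : Hist A E) : 0 ≤ V γ r π μ h := by
  rw [V]
  split
  · rename_i hc
    refine mul_nonneg (le_of_lt (by rw [one_div]; exact inv_pos.2 (mul_pos hc.1 hc.2)))
      (tsum_nonneg ?_)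
    intro n
    exact Sterm_nonneg γ hγ0 r hr π μ h n
  · exact le_refl 0

lemma V_le_one (γ : ℕ → ℝ) (hγ0 : ∀ t, 0 ≤ γ t) (hγs : Summable γ)
    (r : E → ℝ) (hr : ∀ e, 0 ≤ r e ∧ r e ≤ 1)
    (π : Policy A E) (μ : CCS A E) (h : Hist A E) : V γ r π μ h ≤ 1 := by
  rw [V]
  split
  · rename_i hc
    have hpos := mul_pos hc.1 hc.2
    rw [one_div]
    refine le_trans (mul_le_mul_of_nonneg_left (Sterm_tsum_le γ hγ0 hγs r hr π μ h)
      (inv_pos.2 hpos).le) ?_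
    rw [inv_mul_cancel₀ hpos.ne']
  · exact zero_le_one

end Aux3
section Aux4
set_option linter.unusedSectionVars false

lemma Gam_eq_sub (γ : ℕ → ℝ) (hγs : Summable γ) (t : ℕ) :
    Gam γ t = (∑' i, γ i) - ∑ i ∈ Finset.range t, γ i := by
  have h1 : Gam γ t = ∑' i, γ (i + t) := by
    rw [Gam]; exact tsum_congr fun i => by rw [add_comm]
  have h2 := Summable.sum_add_tsum_nat_add t hγs
  rw [h1]; linarith

lemma Gam_tendsto (γ : ℕ → ℝ) (hγs : Summable γ) :
    Filter.Tendsto (Gam γ) Filter.atTop (nhds 0) := by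
  have h1 : Filter.Tendsto (fun t => (∑' i, γ i) - ∑ i ∈ Finset.range t, γ i)
      Filter.atTop (nhds ((∑' i, γ i) - (∑' i, γ i))) :=
    Filter.Tendsto.sub tendsto_const_nhds hγs.hasSum.tendsto_sum_nat
  rw [sub_self] at h1
  exact h1.congr fun t => (Gam_eq_sub γ hγs t).symm

variable {A E : Type*} [Fintype E]

/-- Central lemma: a `ξ'`-optimal policy cannot deviate from `π₀` on a `π₀`-consistent
history where following `π₀` is worth more than `ε'`. -/
lemma no_deviation (γ : ℕ → ℝ) (hγ0 : ∀ t, 0 ≤ γ t) (hγs : Summable γ)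
    (r : E → ℝ) (hr : ∀ e, 0 ≤ r e ∧ r e ≤ 1) (e0 : E) (hr0 : r e0 = 0)
    (ξ : CCS A E) (hfs : FullSupport ξ) (π₀ : Policy A E)
    (ε' : ℝ) (hε'0 : 0 < ε')
    (ν ξ' : CCS A E) (hν : ∀ h, ν.val h = dogma ξ π₀ e0 h)
    (hξ' : ∀ h, ξ'.val h = (1 / 2) * ν.val h + (ε' / 2) * ξ.val h)
    (πs : Policy A E) (hopt : ∀ h, V γ r πs ξ' h = VOpt γ r ξ' h)
    (h : Hist A E) (hf : FollowsFrom π₀ [] h)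
    (hG : 0 < Gam γ (h.length + 1)) (hlt : ε' < V γ r π₀ ξ h) :
    πs h = π₀ h := by
  by_contra hdev
  set G := Gam γ (h.length + 1) with hGdef
  have hξh : 0 < ξ.val h := hfs h
  have hνh : ν.val h = ξ.val h := by rw [hν]; exact dogma_consistent ξ π₀ e0 h hf
  have hξ'h : ξ'.val h = (1 + ε') / 2 * ξ.val h := by rw [hξ', hνh]; ring
  have hξ'pos : 0 < ξ'.val h := by rw [hξ'h]; positivity
  -- values of π₀ in ξ' and ξ coincide
  have hterm₀ : ∀ n, Sterm γ r π₀ ξ' h n = (1 + ε') / 2 * Sterm γ r π₀ ξ h n := by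
    intro n
    have hin : (∑ es : Fin (n+1) → E,
        r (es (Fin.last n)) * ξ'.val (extendH π₀ h (List.ofFn es))) =
        (1 + ε') / 2 * ∑ es : Fin (n+1) → E,
          r (es (Fin.last n)) * ξ.val (extendH π₀ h (List.ofFn es)) := by
      rw [Finset.mul_sum]
      refine Finset.sum_congr rfl fun es _ => ?_
      have hext : ν.val (extendH π₀ h (List.ofFn es)) = ξ.val (extendH π₀ h (List.ofFn es)) := by
        rw [hν]; exact dogma_extend_consistent ξ π₀ e0 h hf (List.ofFn es)
      rw [hξ', hext]; ring
    rw [Sterm, Sterm, hin]; ring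
  have hVA : V γ r π₀ ξ' h = V γ r π₀ ξ h := by
    rw [V_eq_of_pos γ r π₀ ξ' h hG hξ'pos, V_eq_of_pos γ r π₀ ξ h hG hξh,
      tsum_congr hterm₀, tsum_mul_left, hξ'h]
    have h1 : (1:ℝ) + ε' ≠ 0 := by positivity
    field_simp
  -- value of πs in ξ' is at most ε'
  have hterms : ∀ n, Sterm γ r πs ξ' h n = ε' / 2 * Sterm γ r πs ξ h n := by
    intro n
    have hin : (∑ es : Fin (n+1) → E,
        r (es (Fin.last n)) * ξ'.val (extendH πs h (List.ofFn es))) =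
        ε' / 2 * ∑ es : Fin (n+1) → E,
          r (es (Fin.last n)) * ξ.val (extendH πs h (List.ofFn es)) := by
      rw [Finset.mul_sum]
      refine Finset.sum_congr rfl fun es _ => ?_
      have hz : r (es (Fin.last n)) * ν.val (extendH πs h (List.ofFn es)) = 0 := by
        rw [hν]; exact dogma_deviate ξ π₀ e0 r hr0 h hf πs hdev n es
      rw [hξ']
      nlinarith [hz]
    rw [Sterm, Sterm, hin]; ring
  have hWs_le : (∑' n, Sterm γ r πs ξ h n) ≤ G * ξ.val h :=
    Sterm_tsum_le γ hγ0 hγs r hr πs ξ h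
  have hVB : V γ r πs ξ' h ≤ ε' := by
    rw [V_eq_of_pos γ r πs ξ' h hG hξ'pos, tsum_congr hterms, tsum_mul_left, hξ'h]
    have hD : 0 < G * ((1 + ε') / 2 * ξ.val h) := by positivity
    rw [one_div, inv_mul_le_iff₀ hD]
    have hstep : ε' / 2 * (∑' n, Sterm γ r πs ξ h n) ≤ ε' / 2 * (G * ξ.val h) :=
      mul_le_mul_of_nonneg_left hWs_le (by positivity)
    nlinarith [mul_pos hG hξh, sq_nonneg ε', hstep]
  -- optimality contradiction
  have hsup : V γ r π₀ ξ' h ≤ VOpt γ r ξ' h := by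
    rw [VOpt]
    refine le_ciSup (f := fun π => V γ r π ξ' h) ⟨1, ?_⟩ π₀
    rintro x ⟨π, rfl⟩
    exact V_le_one γ hγ0 hγs r hr π ξ' h
  rw [hVA] at hsup
  rw [hopt h] at hVB
  linarith

end Aux4
/-- **Some AIXIs are stupid (core construction).** There is a policy `π₀` and `ε'` such
that every optimal policy for the dogmatic mixture `ξ' = (1/2)·ν + (ε'/2)·ξ` has
`ξ`-intelligence within `ε` of the minimal intelligence. -/
theorem some_AIXIs_are_stupid {A E : Type*} [Fintype A] [Nonempty A] [Fintype E] [Nonempty E]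
    (γ : ℕ → ℝ) (hγ0 : ∀ t, 0 ≤ γ t) (hγs : Summable γ)
    (r : E → ℝ) (hr : ∀ e : E, 0 ≤ r e ∧ r e ≤ 1)
    (hΓ1 : 0 < Gam γ 1)
    (e0 : E) (hr0 : r e0 = 0)
    (ξ : CCS A E) (hfs : FullSupport ξ)
    (hval : ∀ (π : Policy A E) (h : Hist A E), 0 < V γ r π ξ h)
    (ε : ℝ) (hε : 0 < ε) :
    ∃ (π₀ : Policy A E) (ε' : ℝ), 0 < ε' ∧ ε' ≤ 1 ∧
      ∀ ν ξ' : CCS A E,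
        (∀ h : Hist A E, ν.val h = dogma ξ π₀ e0 h) →
        (∀ h : Hist A E, ξ'.val h = (1 / 2) * ν.val h + (ε' / 2) * ξ.val h) →
        ∀ πs : Policy A E, (∀ h : Hist A E, V γ r πs ξ' h = VOpt γ r ξ' h) →
          V γ r πs ξ [] < (⨅ π : Policy A E, V γ r π ξ []) + ε := by
  classical
  -- Γ is positive at every time
  have hGpos : ∀ L : ℕ, 0 < Gam γ (L + 1) := by
    intro L
    by_contra hng
    have hL : (List.replicate L (Classical.arbitrary (A × E))).length = L :=
      List.length_replicate
    have h1 := hval (fun _ => Classical.arbitrary A) (List.replicate L (Classical.arbitrary (A × E)))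
    rw [V, if_neg (by rw [hL]; tauto)] at h1
    exact lt_irrefl 0 h1
  -- pick a nearly-worst policy π₀
  set I := ⨅ π : Policy A E, V γ r π ξ [] with hI
  have hex : ∃ π : Policy A E, V γ r π ξ [] < I + ε / 2 := by
    apply exists_lt_of_ciInf_lt
    rw [← hI]; linarith
  obtain ⟨π₀, hπ₀⟩ := hex
  -- pick a horizon N beyond which the discounted tail is negligible
  have hev := (Gam_tendsto γ hγs).eventually_lt_const (show (0:ℝ) < ε / 2 * Gam γ 1 by positivity)
  obtain ⟨N, hN⟩ := Filter.eventually_atTop.1 hev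
  have hGam2 : Gam γ (N + 2) < ε / 2 * Gam γ 1 := hN (N + 2) (by omega)
  -- minimum value of π₀ over short histories
  set m := (Finset.range (N + 1)).inf' (show (Finset.range (N + 1)).Nonempty from ⟨0, Finset.mem_range.2 (by omega)⟩)
    (fun n => (Finset.univ : Finset (Fin n → A × E)).inf' Finset.univ_nonempty
      (fun f => V γ r π₀ ξ (List.ofFn f))) with hm
  have hm0 : 0 < m := by
    rw [hm, Finset.lt_inf'_iff]
    intro n _
    rw [Finset.lt_inf'_iff]
    intro f _
    exact hval π₀ (List.ofFn f)
  have hmle : ∀ h : Hist A E, h.length ≤ N → m ≤ V γ r π₀ ξ h := by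
    intro h hlen
    have h1 : m ≤ (Finset.univ : Finset (Fin h.length → A × E)).inf' Finset.univ_nonempty
        (fun f => V γ r π₀ ξ (List.ofFn f)) :=
      Finset.inf'_le _ (Finset.mem_range.2 (by omega))
    have h2 : (Finset.univ : Finset (Fin h.length → A × E)).inf' Finset.univ_nonempty
        (fun f => V γ r π₀ ξ (List.ofFn f)) ≤ V γ r π₀ ξ (List.ofFn h.get) :=
      Finset.inf'_le _ (Finset.mem_univ _)
    rw [List.ofFn_get] at h2
    exact h1.trans h2
  set ε' := min 1 (m / 2) with hε'
  have hε'0 : 0 < ε' := lt_min one_pos (by linarith)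
  have hε'm : ε' < m := lt_of_le_of_lt (min_le_right _ _) (by linarith)
  refine ⟨π₀, ε', hε'0, min_le_left _ _, ?_⟩
  intro ν ξ' hν hξ'def πs hopt
  -- πs agrees with π₀ on all short consistent histories
  have key : ∀ h : Hist A E, FollowsFrom π₀ [] h → h.length ≤ N → πs h = π₀ h := by
    intro h hf hlen
    exact no_deviation γ hγ0 hγs r hr e0 hr0 ξ hfs π₀ ε' hε'0 ν ξ' hν hξ'def πs hopt h hf
      (hGpos h.length) (lt_of_lt_of_le hε'm (hmle h hlen))
  have agree : ∀ (l : List E) (pre : Hist A E), FollowsFrom π₀ [] pre →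
      pre.length + l.length ≤ N + 1 → extendH πs pre l = extendH π₀ pre l := by
    intro l
    induction l with
    | nil => intro pre _ _; rfl
    | cons e l ih =>
      intro pre hf hlen
      have hps : πs pre = π₀ pre := key pre hf (by simp at hlen; omega)
      simp only [extendH, hps]
      apply ih
      · have := followsFrom_snoc π₀ e pre [] hf
        simpa using this
      · simp at hlen ⊢; omega
  -- final value comparison at the empty history
  have hξnil : 0 < ξ.val ([] : Hist A E) := hfs []
  have hG1 : 0 < Gam γ (([] : Hist A E).length + 1) := hGpos 0
  set D := Gam γ (([] : Hist A E).length + 1) * ξ.val ([] : Hist A E) with hD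
  have hDpos : 0 < D := mul_pos hG1 hξnil
  have hsummable := Sterm_summable γ hγ0 hγs r hr πs ξ ([] : Hist A E)
  have hsplit : (∑' n, Sterm γ r πs ξ [] n) =
      (∑ n ∈ Finset.range (N + 1), Sterm γ r πs ξ [] n) +
        ∑' i, Sterm γ r πs ξ [] (i + (N + 1)) :=
    (Summable.sum_add_tsum_nat_add (N + 1) hsummable).symm
  have hfirst : ∀ n ∈ Finset.range (N + 1), Sterm γ r πs ξ [] n = Sterm γ r π₀ ξ [] n := by
    intro n hn
    rw [Finset.mem_range] at hn
    rw [Sterm, Sterm]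
    congr 1
    refine Finset.sum_congr rfl fun es _ => ?_
    rw [agree (List.ofFn es) [] trivial (by simp; omega)]
  have hW0 : (∑ n ∈ Finset.range (N + 1), Sterm γ r πs ξ [] n) ≤
      ∑' n, Sterm γ r π₀ ξ [] n := by
    rw [Finset.sum_congr rfl hfirst]
    exact Summable.sum_le_tsum _ (fun n _ => Sterm_nonneg γ hγ0 r hr π₀ ξ [] n)
      (Sterm_summable γ hγ0 hγs r hr π₀ ξ ([] : Hist A E))
  have htail : (∑' i, Sterm γ r πs ξ [] (i + (N + 1))) ≤
      Gam γ (N + 2) * ξ.val ([] : Hist A E) := by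
    have h1 : ∀ i, Sterm γ r πs ξ [] (i + (N + 1)) ≤
        γ ((N + 2) + i) * ξ.val ([] : Hist A E) := by
      intro i
      have := Sterm_le γ hγ0 r hr πs ξ [] (i + (N + 1))
      rwa [show ([] : Hist A E).length + 1 + (i + (N + 1)) = (N + 2) + i by simp; omega] at this
    have h2 := Summable.tsum_le_tsum h1 ((summable_nat_add_iff (N + 1)).2 hsummable)
      ((summable_shift γ hγs (N + 2)).mul_right (ξ.val ([] : Hist A E)))
    rwa [tsum_mul_right] at h2
  have hVeq : V γ r πs ξ [] = (1 / D) * ((∑ n ∈ Finset.range (N + 1), Sterm γ r πs ξ [] n) +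
      ∑' i, Sterm γ r πs ξ [] (i + (N + 1))) := by
    rw [V_eq_of_pos γ r πs ξ [] hG1 hξnil, hsplit]
  have hV0eq : V γ r π₀ ξ [] = (1 / D) * ∑' n, Sterm γ r π₀ ξ [] n :=
    V_eq_of_pos γ r π₀ ξ [] hG1 hξnil
  have htail2 : (∑' i, Sterm γ r πs ξ [] (i + (N + 1))) < ε / 2 * D := by
    refine lt_of_le_of_lt htail ?_
    rw [hD]
    have : Gam γ (([] : Hist A E).length + 1) = Gam γ 1 := rfl
    rw [this]
    nlinarith
  have hfin : V γ r πs ξ [] < V γ r π₀ ξ [] + ε / 2 := by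
    rw [hVeq, hV0eq]
    have hlt : (∑ n ∈ Finset.range (N + 1), Sterm γ r πs ξ [] n) +
        (∑' i, Sterm γ r πs ξ [] (i + (N + 1))) <
        (∑' n, Sterm γ r π₀ ξ [] n) + ε / 2 * D := by linarith
    have := mul_lt_mul_of_pos_left hlt (show (0:ℝ) < 1 / D by positivity)
    refine lt_of_lt_of_le this ?_
    rw [mul_add]
    have : 1 / D * (ε / 2 * D) = ε / 2 := by field_simp
    rw [this]
  linarith
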